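/- Let (X,μ) be a standard probability space and let T_1, …, T_n be measure-preserving measurable bijections of X whose supports {x : T_k(x) ≠ x} are pairwise disjoint. Suppose there are pairwise relatively prime integers p_1, …, p_n ≥ 2 such that for each k ∈ {1,…,n} and μ-a.e. x, the T_k-orbit of x is finite with cardinality dividing a power of p_k. Then for every k ∈ {1,…,n}, T_k belongs to the closure of the group generated by the product T_1 T_2 ⋯ T_n in the uniform topology: for every ε > 0 there exists m ∈ ℕ with μ({x : (T_1 T_2 ⋯ T_n)^m(x) ≠ T_k(x)}) < ε. -/

import Mathlib

open MeasureTheory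
open scoped ENNReal

section Aux

variable {X : Type*}

private lemma perm_pow_fix (σ : Equiv.Perm X) {x : X} (h : σ x = x) (m : ℕ) :
    (σ ^ m) x = x := by
  induction m with
  | zero => rfl
  | succ m ih => rw [pow_succ, Equiv.Perm.mul_apply, h, ih]

private lemma perm_dvd_fix (σ : Equiv.Perm X) {x : X} {a b : ℕ} (h : (σ ^ a) x = x)
    (hd : a ∣ b) : (σ ^ b) x = x := by
  obtain ⟨c, rfl⟩ := hd
  rw [pow_mul]
  exact perm_pow_fix _ h c

private lemma perm_zpow_fix (σ : Equiv.Perm X) {x : X} (h : σ x = x) (q : ℤ) :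
    (σ ^ q) x = x := by
  cases q with
  | ofNat q => rw [Int.ofNat_eq_coe, zpow_natCast]; exact perm_pow_fix _ h q
  | negSucc q =>
    rw [zpow_negSucc]
    have := perm_pow_fix σ h (q + 1)
    exact (Equiv.Perm.inv_eq_iff_eq).2 this.symm

private lemma perm_sub_period (σ : Equiv.Perm X) {x : X} {a b : ℕ} (hab : a ≤ b)
    (h : (σ ^ a) x = (σ ^ b) x) : (σ ^ (b - a)) x = x := by
  have e : (σ ^ (b - a)) ((σ ^ a) x) = (σ ^ a) x := by
    rw [← Equiv.Perm.mul_apply, ← pow_add, Nat.sub_add_cancel hab, ← h]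
  have c : Commute (σ ^ (b - a)) ((σ ^ a)⁻¹) := (Commute.pow_pow_self σ (b - a) a).inv_right
  have hc := congrArg (fun τ : Equiv.Perm X => τ ((σ ^ a) x)) c.eq
  simp only [Equiv.Perm.mul_apply] at hc
  rwa [(Equiv.Perm.inv_eq_iff_eq (f := σ ^ a) (x := (σ ^ a) x) (y := x)).2 rfl, e,
    (Equiv.Perm.inv_eq_iff_eq (f := σ ^ a) (x := (σ ^ a) x) (y := x)).2 rfl] at hc

/-- The orbit cardinality is a period. -/
private lemma perm_pow_ncard_fix (σ : Equiv.Perm X) (x : X)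
    (h : {y : X | ∃ i : ℤ, (σ ^ i) x = y}.Finite) :
    (σ ^ {y : X | ∃ i : ℤ, (σ ^ i) x = y}.ncard) x = x := by
  set S := {y : X | ∃ i : ℤ, (σ ^ i) x = y} with hSdef
  have hmem : ∀ j : ℕ, (σ ^ j) x ∈ S := fun j => ⟨(j : ℤ), by rw [zpow_natCast]⟩
  -- x is a periodic point
  have hex : ∃ a b : ℕ, a < b ∧ (σ ^ a) x = (σ ^ b) x := by
    by_contra hcon
    push_neg at hcon
    have hinj : Function.Injective fun j : ℕ => (σ ^ j) x := by
      intro a b hab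
      by_contra hne
      rcases Nat.lt_or_ge a b with hlt | hge
      · exact (hcon a b hlt) hab
      · exact (hcon b a (lt_of_le_of_ne hge (Ne.symm hne))) hab.symm
    exact (Set.infinite_of_injective_forall_mem hinj hmem) h
  obtain ⟨a, b, hab, he⟩ := hex
  have hper : x ∈ Function.periodicPts ⇑σ := by
    refine ⟨b - a, by omega, ?_⟩
    have : ((⇑σ)^[b - a]) x = x := by
      rw [Equiv.Perm.iterate_eq_pow]
      exact perm_sub_period σ (le_of_lt hab) he
    exact this
  set d := Function.minimalPeriod ⇑σ x with hd
  have hd0 : 0 < d := Function.minimalPeriod_pos_of_mem_periodicPts hper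
  have hdfix : (σ ^ d) x = x := by
    have := Function.isPeriodicPt_minimalPeriod ⇑σ x
    rwa [Function.IsPeriodicPt, Function.IsFixedPt, Equiv.Perm.iterate_eq_pow] at this
  -- S is exactly the image of `Iio d`
  have hSeq : S = (fun j : ℕ => (σ ^ j) x) '' Set.Iio d := by
    ext y
    constructor
    · rintro ⟨i, rfl⟩
      have hd0' : (0 : ℤ) < (d : ℤ) := by exact_mod_cast hd0
      have hnn : 0 ≤ i % (d : ℤ) := Int.emod_nonneg i (by omega)
      have hlt : i % (d : ℤ) < (d : ℤ) := Int.emod_lt_of_pos i hd0'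
      obtain ⟨r, hrd, hri⟩ : ∃ r : ℕ, r < d ∧ i % (d : ℤ) = (r : ℤ) :=
        ⟨(i % (d : ℤ)).toNat, by omega, by omega⟩
      refine ⟨r, hrd, ?_⟩
      have h1 : σ ^ i = σ ^ (i % (d : ℤ)) * (σ ^ (d : ℤ)) ^ (i / (d : ℤ)) := by
        rw [← zpow_mul, ← zpow_add, Int.emod_add_mul_ediv i (d : ℤ)]
      have h2 : ((σ ^ (d : ℤ)) ^ (i / (d : ℤ))) x = x := by
        refine perm_zpow_fix _ ?_ _
        rw [zpow_natCast]
        exact hdfix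
      show (σ ^ r) x = (σ ^ i) x
      rw [h1, Equiv.Perm.mul_apply, h2, hri, zpow_natCast]
    · rintro ⟨j, _, rfl⟩
      exact hmem j
  have hinjOn : Set.InjOn (fun j : ℕ => (σ ^ j) x) (Set.Iio d) := by
    have key : ∀ a b : ℕ, a < d → b < d → a ≤ b → (σ ^ a) x = (σ ^ b) x → a = b := by
      intro a b _ hbd hle heq
      by_contra hne
      have hlt : a < b := lt_of_le_of_ne hle hne
      have hfix : (σ ^ (b - a)) x = x := perm_sub_period σ hle heq
      have hpp : Function.IsPeriodicPt ⇑σ (b - a) x := by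
        rw [Function.IsPeriodicPt, Function.IsFixedPt, Equiv.Perm.iterate_eq_pow]
        exact hfix
      have := hpp.minimalPeriod_le (by omega)
      omega
    intro a ha b hb heq
    rcases Nat.le_total a b with hle | hle
    · exact key a b ha hb hle heq
    · exact (key b a hb ha hle heq.symm).symm
  have hcard : S.ncard = d := by
    rw [hSeq, Set.ncard_image_of_injOn hinjOn, ← Finset.coe_range,
      Set.ncard_coe_finset, Finset.card_range]
  rw [hcard]
  exact hdfix

private lemma list_prod_apply_fix (l : List (Equiv.Perm X)) (x : X)
    (h : ∀ i (hi : i < l.length), l[i] x = x) : l.prod x = x := by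
  induction l with
  | nil => rfl
  | cons σ t ih =>
    have h0 : σ x = x := h 0 (by simp)
    have ht : ∀ i (hi : i < t.length), t[i] x = x := fun i hi => by
      exact h (i + 1) (by simpa using Nat.succ_lt_succ hi)
    rw [List.prod_cons, Equiv.Perm.mul_apply, ih ht, h0]

private lemma list_prod_apply_single (l : List (Equiv.Perm X)) (k : ℕ) (x y : X)
    (hk : k < l.length)
    (hoth : ∀ i (hi : i < l.length), i ≠ k → l[i] x = x ∧ l[i] y = y)
    (hky : l[k] x = y) : l.prod x = y := by
  induction l generalizing k with
  | nil => simp at hk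
  | cons σ t ih =>
    rw [List.prod_cons, Equiv.Perm.mul_apply]
    cases k with
    | zero =>
      have hx : t.prod x = x := by
        refine list_prod_apply_fix t x fun i hi => ?_
        have := hoth (i + 1) (by simpa using Nat.succ_lt_succ hi) (by simp)
        simpa using this.1
      rw [hx]
      simpa using hky
    | succ k =>
      have h0 : σ y = y := by
        have := hoth 0 (by simp) (by simp)
        simpa using this.2
      have ht : t.prod x = y := by
        refine ih k (by simpa using hk) (fun i hi hik => ?_) (by simpa using hky)
        have := hoth (i + 1) (by simpa using Nat.succ_lt_succ hi) (by simpa using hik)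
        simpa using this
      rw [ht, h0]

private lemma list_prod_pow {G : Type*} [Monoid G] (l : List G) (h : l.Pairwise Commute)
    (m : ℕ) : l.prod ^ m = (l.map (· ^ m)).prod := by
  induction l with
  | nil => simp
  | cons a t ih =>
    rw [List.pairwise_cons] at h
    rw [List.prod_cons, List.map_cons, List.prod_cons, ← ih h.2,
      (Commute.list_prod_right t a h.1).mul_pow]

end Aux

/-- If `T 1, …, T n` are measure-preserving bijections with pairwise disjoint
supports whose orbits are a.e. finite with cardinalities dividing powers of pairwise relatively
prime integers `p 1, …, p n ≥ 2`, then each `T k` lies in the uniform closure of the cyclic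
group generated by the product `T 1 * T 2 * ⋯ * T n`. -/
theorem mem_closure_of_pairwise_disjoint_supports_coprime_orbits
    {X : Type*} [MeasurableSpace X] [StandardBorelSpace X]
    (μ : Measure X) [IsProbabilityMeasure μ]
    (n : ℕ) (T : Fin n → Equiv.Perm X)
    (hmeas : ∀ k, Measurable ⇑(T k) ∧ Measurable ⇑(T k).symm ∧ MeasurePreserving ⇑(T k) μ μ)
    (hdisj : ∀ k k' : Fin n, k ≠ k' →
      Disjoint {x : X | T k x ≠ x} {x : X | T k' x ≠ x})
    (p : Fin n → ℕ) (hp : ∀ k, 2 ≤ p k)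
    (hcop : ∀ k k' : Fin n, k ≠ k' → Nat.Coprime (p k) (p k'))
    (horb : ∀ k, ∀ᵐ x ∂μ, ∃ j : ℕ, {y : X | ∃ i : ℤ, (T k ^ i) x = y}.Finite ∧
      {y : X | ∃ i : ℤ, (T k ^ i) x = y}.ncard ∣ p k ^ j) :
    ∀ k : Fin n, ∀ ε : ℝ≥0∞, 0 < ε →
      ∃ m : ℕ, μ {x : X | ((List.ofFn T).prod ^ m) x ≠ T k x} < ε := by
  intro k ε hε
  -- measurability of powers
  have hpowmeas : ∀ (i : Fin n) (N : ℕ), Measurable ⇑(T i ^ N) := by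
    intro i N
    rw [Equiv.Perm.coe_pow]
    exact (hmeas i).1.iterate N
  -- the good sets
  set F : Fin n → ℕ → Set X := fun i J => {x | (T i ^ p i ^ J) x = x} with hF
  have hFmeas : ∀ i J, MeasurableSet (F i J) := by
    intro i J
    letI := upgradeStandardBorel X
    have : F i J = (fun x => ((T i ^ p i ^ J) x, x)) ⁻¹' Set.diagonal X := by
      ext x
      simp [Set.diagonal, hF, eq_comm]
    rw [this]
    exact ((hpowmeas i _).prodMk measurable_id) isClosed_diagonal.measurableSet
  have hFmono : ∀ i, Monotone (F i) := by
    intro i J J' hJ x hx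
    exact perm_dvd_fix _ hx (pow_dvd_pow _ hJ)
  set G : ℕ → Set X := fun J => ⋂ i, F i J with hG
  have hGmeas : ∀ J, MeasurableSet (G J) := fun J => MeasurableSet.iInter fun i => hFmeas i J
  have hGmono : Monotone G := fun J J' hJ =>
    Set.iInter_mono fun i => hFmono i hJ
  -- a.e. membership in the union
  have hae : ∀ i : Fin n, ∀ᵐ x ∂μ, x ∈ ⋃ J, F i J := by
    intro i
    filter_upwards [horb i] with x hx
    obtain ⟨j, hfin, hdvd⟩ := hx
    exact Set.mem_iUnion.2 ⟨j, perm_dvd_fix _ (perm_pow_ncard_fix (T i) x hfin) hdvd⟩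
  have hae2 : ∀ᵐ x ∂μ, x ∈ ⋃ J, G J := by
    filter_upwards [ae_all_iff.2 hae] with x hx
    choose Jf hJf using fun i => Set.mem_iUnion.1 (hx i)
    refine Set.mem_iUnion.2 ⟨Finset.univ.sup Jf, Set.mem_iInter.2 fun i => ?_⟩
    exact hFmono i (Finset.le_sup (Finset.mem_univ i)) (hJf i)
  have hnull : μ (⋂ J, (G J)ᶜ) = 0 := by
    rw [← Set.compl_iUnion]
    exact ae_iff.mp hae2
  have htend : Filter.Tendsto (fun J => μ ((G J)ᶜ)) Filter.atTop (nhds 0) := by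
    have h1 := tendsto_measure_iInter_atTop (μ := μ) (s := fun J => (G J)ᶜ)
      (fun J => ((hGmeas J).compl).nullMeasurableSet)
      (fun a b hab => Set.compl_subset_compl.2 (hGmono hab))
      ⟨0, measure_ne_top μ _⟩
    rw [hnull] at h1
    exact h1
  obtain ⟨J, hJ⟩ := (htend.eventually (gt_mem_nhds hε)).exists
  -- build m by CRT
  set q : Fin n → ℕ := fun i => p i ^ (J + 1) with hq
  have hq2 : 1 < q k := lt_of_lt_of_le (hp k) (Nat.le_self_pow (by omega) _)
  set a : ℕ := ∏ i ∈ Finset.univ.erase k, q i with ha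
  have hacop : Nat.Coprime a (q k) := by
    refine Nat.Coprime.prod_left fun i hi => ?_
    exact Nat.Coprime.pow _ _ (hcop i k (Finset.ne_of_mem_erase hi))
  obtain ⟨b, -, hb⟩ := Nat.exists_mul_mod_eq_one_of_coprime hacop hq2
  refine ⟨a * b, ?_⟩
  -- pointwise evaluation on G (J+1)
  have hpoint : ∀ x ∈ G (J + 1), ((List.ofFn T).prod ^ (a * b)) x = T k x := by
    intro x hx
    have hx' : ∀ i : Fin n, (T i ^ q i) x = x := fun i => Set.mem_iInter.1 hx i
    set m := a * b with hm
    set y := T k x with hy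
    -- facts for i ≠ k
    have hxi : ∀ i : Fin n, i ≠ k → (T i ^ m) x = x := by
      intro i hik
      refine perm_dvd_fix _ (hx' i) ?_
      exact dvd_mul_of_dvd_left
        (Finset.dvd_prod_of_mem _ (Finset.mem_erase.2 ⟨hik, Finset.mem_univ i⟩)) b
    have hyi : ∀ i : Fin n, i ≠ k → (T i ^ m) y = y := by
      intro i hik
      by_cases hxy : T k x = x
      · rw [hy, hxy]
        exact hxi i hik
      · have hymem : y ∈ {z : X | T k z ≠ z} := by
          simp only [Set.mem_setOf_eq, hy]
          intro hcon
          exact hxy ((T k).injective hcon)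
        have : T i y = y := by
          by_contra hcon
          exact (Set.disjoint_left.1 (hdisj i k hik)) hcon hymem
        exact perm_pow_fix _ this m
    -- fact for k
    have hxk : (T k ^ m) x = y := by
      have hmod : m % q k = 1 := hb
      have hsplit : m = 1 + q k * (m / q k) := by
        conv_lhs => rw [← Nat.mod_add_div m (q k), hmod]
      rw [hsplit, pow_add, Equiv.Perm.mul_apply,
        perm_dvd_fix _ (hx' k) (Dvd.intro _ rfl), pow_one]
    -- commuting product
    have hcomm : (List.ofFn T).Pairwise Commute := by
      refine List.pairwise_ofFn.2 fun i j hij => ?_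
      refine Equiv.Perm.Disjoint.commute ?_
      intro z
      by_cases hz : T i z = z
      · exact Or.inl hz
      · exact Or.inr (by
          by_contra hz'
          exact (Set.disjoint_left.1 (hdisj i j (ne_of_lt hij))) hz hz')
    have hP : (List.ofFn T).prod ^ m = (List.ofFn fun i => T i ^ m).prod := by
      rw [list_prod_pow _ hcomm m, List.map_ofFn]
      rfl
    rw [hP]
    refine list_prod_apply_single _ k.1 x y (by simp) ?_ ?_
    · intro i hi hik
      have hi' : i < n := by simpa using hi
      have hik' : (⟨i, hi'⟩ : Fin n) ≠ k := by
        intro hcon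
        exact hik (by simpa using congrArg Fin.val hcon)
      simp only [List.getElem_ofFn]
      exact ⟨hxi _ hik', hyi _ hik'⟩
    · simp only [List.getElem_ofFn, Fin.eta]
      exact hxk
  -- conclude
  have hsub : {x : X | ((List.ofFn T).prod ^ (a * b)) x ≠ T k x} ⊆ (G (J + 1))ᶜ := by
    intro x hx hxG
    exact hx (hpoint x hxG)
  calc μ {x : X | ((List.ofFn T).prod ^ (a * b)) x ≠ T k x}
      ≤ μ ((G (J + 1))ᶜ) := measure_mono hsub
    _ ≤ μ ((G J)ᶜ) := measure_mono (Set.compl_subset_compl.2 (hGmono (Nat.le_succ J)))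
    _ < ε := hJ
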